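/- For any real number A ≥ 0, integer p ≥ 1, and Z ∈ [0,1] (with Z ≠ 1 if p = 1), the iterated integral ∫_{0 ≤ z_p ≤ ... ≤ z_1 ≤ Z} (dz_1/z_1) ⋯ (dz_{p-1}/z_{p-1}) (dz_p/(1-z_p)) · z_p^A equals the convergent series ∑_{n=1}^∞ Z^{n+A}/(n+A)^p. -/

import Mathlib

open MeasureTheory

namespace Stmt0Aux

/-- The integrand. -/
noncomputable def F (A : ℝ) (p : ℕ) (z : Fin (p+1) → ℝ) : ℝ :=
  (∏ i : Fin p, (z i.castSucc)⁻¹) * (z (Fin.last p)) ^ A / (1 - z (Fin.last p))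

/-- The simplex. -/
def S (p : ℕ) (Z : ℝ) : Set (Fin (p+1) → ℝ) :=
  {z | (∀ i j : Fin (p+1), i ≤ j → z j ≤ z i) ∧ 0 ≤ z (Fin.last p) ∧ z 0 ≤ Z}

lemma measF (A : ℝ) (p : ℕ) : Measurable (F A p) := by unfold F; fun_prop

lemma measS (p : ℕ) (Z : ℝ) : MeasurableSet (S p Z) := by
  refine MeasurableSet.inter ?_ (MeasurableSet.inter ?_ ?_)
  · show MeasurableSet {z : Fin (p+1) → ℝ | ∀ i j : Fin (p+1), i ≤ j → z j ≤ z i}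
    rw [Set.setOf_forall]
    refine MeasurableSet.iInter fun i => ?_
    rw [Set.setOf_forall]
    refine MeasurableSet.iInter fun j => ?_
    by_cases h : i ≤ j
    · simp only [h, forall_true_left]
      exact measurableSet_le (measurable_pi_apply j) (measurable_pi_apply i)
    · simp [h]
  · exact measurableSet_le measurable_const (measurable_pi_apply _)
  · exact measurableSet_le (measurable_pi_apply _) measurable_const

lemma lint_rpow (r : ℝ) (hr : 0 ≤ r) (Z : ℝ) (hZ : 0 ≤ Z) (c : ℝ) (hc : 0 < c) :
    ∫⁻ x in Set.Icc (0:ℝ) Z, ENNReal.ofReal (x ^ r / c)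
      = ENNReal.ofReal (Z ^ (r+1) / ((r+1) * c)) := by
  rw [← Measure.restrict_congr_set Ioc_ae_eq_Icc]
  have hint : IntegrableOn (fun x : ℝ => x ^ r / c) (Set.Ioc 0 Z) := by
    refine (intervalIntegrable_iff_integrableOn_Ioc_of_le hZ).mp ?_
    exact (intervalIntegral.intervalIntegrable_rpow (Or.inl hr)).div_const c
  have hpos : 0 ≤ᵐ[volume.restrict (Set.Ioc (0:ℝ) Z)] fun x : ℝ => x ^ r / c := by
    filter_upwards [ae_restrict_mem measurableSet_Ioc] with x hx
    exact div_nonneg (Real.rpow_nonneg hx.1.le r) hc.le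
  rw [← ofReal_integral_eq_lintegral_ofReal hint hpos]
  congr 1
  rw [← intervalIntegral.integral_of_le hZ, intervalIntegral.integral_div,
    integral_rpow (Or.inl (by linarith)), Real.zero_rpow (by linarith), sub_zero, div_div]

lemma geom (A : ℝ) (x : ℝ) (h0 : 0 < x) (h1 : x < 1) :
    ENNReal.ofReal (x ^ A / (1 - x)) = ∑' n : ℕ, ENNReal.ofReal (x ^ ((n:ℝ) + A)) := by
  have hfun : (fun n : ℕ => x ^ ((n:ℝ) + A)) = fun n => x ^ A * x ^ n := by
    funext n
    rw [add_comm, Real.rpow_add h0, Real.rpow_natCast, mul_comm]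
  have hsum : Summable (fun n : ℕ => x ^ ((n:ℝ) + A)) := by
    rw [hfun]
    exact (summable_geometric_of_lt_one h0.le h1).mul_left _
  rw [← ENNReal.ofReal_tsum_of_nonneg (fun n => Real.rpow_nonneg h0.le _) hsum]
  congr 1
  rw [hfun, tsum_mul_left, tsum_geometric_of_lt_one h0.le h1, div_eq_mul_inv]

lemma esymm (p : ℕ) (x : ℝ) (w : Fin (p+1) → ℝ) :
    (MeasurableEquiv.piFinSuccAbove (fun _ : Fin (p+2) => ℝ) 0).symm (x, w) = Fin.cons x w := by
  simp [MeasurableEquiv.piFinSuccAbove, Fin.insertNth_zero, Fin.consEquiv]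

lemma mem_cons (p : ℕ) (Z x : ℝ) (w : Fin (p+1) → ℝ) :
    (Fin.cons x w : Fin (p+2) → ℝ) ∈ S (p+1) Z ↔ (x ∈ Set.Icc 0 Z ∧ w ∈ S p x) := by
  have hlast : (Fin.cons x w : Fin (p+2) → ℝ) (Fin.last (p+1)) = w (Fin.last p) := by
    rw [← Fin.succ_last, Fin.cons_succ]
  constructor
  · rintro ⟨hmono, hl, h0⟩
    rw [hlast] at hl
    have hw : ∀ i j : Fin (p+1), i ≤ j → w j ≤ w i := fun i j hij => by
      have := hmono i.succ j.succ (Fin.succ_le_succ_iff.mpr hij)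
      simpa using this
    have hw0 : w 0 ≤ x := by
      have := hmono 0 (0 : Fin (p+1)).succ (Fin.zero_le _)
      simpa using this
    have hx0 : 0 ≤ x := le_trans hl (le_trans (hw 0 (Fin.last p) (Fin.zero_le _)) hw0)
    exact ⟨⟨hx0, by simpa using h0⟩, hw, hl, hw0⟩
  · rintro ⟨⟨hx0, hxZ⟩, hw, hl, hw0⟩
    refine ⟨?_, ?_, by simpa using hxZ⟩
    · intro i j hij
      rcases Fin.eq_zero_or_eq_succ i with rfl | ⟨i', rfl⟩
      · rcases Fin.eq_zero_or_eq_succ j with rfl | ⟨j', rfl⟩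
        · exact le_refl _
        · simp only [Fin.cons_succ, Fin.cons_zero]
          exact le_trans (hw 0 j' (Fin.zero_le _)) hw0
      · rcases Fin.eq_zero_or_eq_succ j with rfl | ⟨j', rfl⟩
        · exact absurd (Fin.le_zero_iff.mp hij) (Fin.succ_ne_zero i')
        · simp only [Fin.cons_succ]
          exact hw i' j' (Fin.succ_le_succ_iff.mp hij)
    · rw [hlast]; exact hl

lemma F_cons (A : ℝ) (p : ℕ) (x : ℝ) (w : Fin (p+1) → ℝ) :
    F A (p+1) (Fin.cons x w) = x⁻¹ * F A p w := by
  unfold F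
  have hlast : (Fin.cons x w : Fin (p+2) → ℝ) (Fin.last (p+1)) = w (Fin.last p) := by
    rw [← Fin.succ_last, Fin.cons_succ]
  rw [hlast, Fin.prod_univ_succ]
  have h0 : (Fin.cons x w : Fin (p+2) → ℝ) ((0 : Fin (p+1)).castSucc) = x := by
    simp
  have hi : ∀ i : Fin p, (Fin.cons x w : Fin (p+2) → ℝ) ((i.succ).castSucc) = w i.castSucc := by
    intro i
    rw [← Fin.succ_castSucc, Fin.cons_succ]
  rw [h0]
  simp only [hi]
  ring

lemma key (A : ℝ) (hA : 0 ≤ A) (p : ℕ) :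
    ∀ Z : ℝ, Z ∈ Set.Icc (0:ℝ) 1 →
    (∫⁻ z in S p Z, ENNReal.ofReal (F A p z))
      = ∑' n : ℕ, ENNReal.ofReal (Z ^ ((n:ℝ)+1+A) / ((n:ℝ)+1+A)^(p+1)) := by
  induction p with
  | zero =>
    intro Z hZ
    have mp := measurePreserving_funUnique (volume : Measure ℝ) (Fin 1)
    have hmeasInd : Measurable fun z : Fin 1 → ℝ =>
        Set.indicator (S 0 Z) (fun z => ENNReal.ofReal (F A 0 z)) z :=
      ((measF A 0).ennreal_ofReal).indicator (measS _ _)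
    have e1 : (∫⁻ z in S 0 Z, ENNReal.ofReal (F A 0 z))
        = ∫⁻ x : ℝ, Set.indicator (S 0 Z) (fun z => ENNReal.ofReal (F A 0 z)) (fun _ => x) := by
      rw [← lintegral_indicator (measS _ _), show (volume : Measure (Fin 1 → ℝ))
        = Measure.pi fun _ => volume from volume_pi,
        ← mp.lintegral_comp (f := fun x : ℝ =>
          Set.indicator (S 0 Z) (fun z => ENNReal.ofReal (F A 0 z)) (fun _ => x)) ?_]
      · congr 1
        funext z
        congr 1
        funext i
        exact congrArg z (Subsingleton.elim (α := Fin 1) _ _)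
      · exact hmeasInd.comp (measurable_pi_lambda _ fun _ => measurable_id)
    rw [e1]
    have e2 : (fun x : ℝ => Set.indicator (S 0 Z) (fun z => ENNReal.ofReal (F A 0 z)) (fun _ => x))
        = Set.indicator (Set.Icc 0 Z) (fun x : ℝ => ENNReal.ofReal (x ^ A / (1 - x))) := by
      funext x
      have hmem : ((fun _ => x) ∈ S 0 Z) ↔ x ∈ Set.Icc (0:ℝ) Z := by
        constructor
        · rintro ⟨_, h1, h2⟩; exact ⟨h1, h2⟩
        · rintro ⟨h1, h2⟩; exact ⟨fun i j _ => le_refl x, h1, h2⟩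
      have hFx : F A 0 (fun _ => x) = x ^ A / (1 - x) := by
        unfold F; simp
      by_cases hx : x ∈ Set.Icc (0:ℝ) Z
      · rw [Set.indicator_of_mem (hmem.mpr hx), Set.indicator_of_mem hx, hFx]
      · rw [Set.indicator_of_notMem (fun hc => hx (hmem.mp hc)),
          Set.indicator_of_notMem hx]
    rw [e2, lintegral_indicator measurableSet_Icc]
    have h01 : ∀ᵐ x : ℝ, x ∉ ({0, 1} : Set ℝ) :=
      (((Set.finite_singleton (1:ℝ)).insert 0).countable).ae_notMem volume
    have hcong : ∀ᵐ x : ℝ, x ∈ Set.Icc (0:ℝ) Z →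
        ENNReal.ofReal (x ^ A / (1 - x)) = ∑' n : ℕ, ENNReal.ofReal (x ^ ((n:ℝ) + A)) := by
      filter_upwards [h01] with x hx hmem
      simp only [Set.mem_insert_iff, Set.mem_singleton_iff, not_or] at hx
      have hx0 : 0 < x := lt_of_le_of_ne hmem.1 (Ne.symm hx.1)
      have hx1 : x < 1 := lt_of_le_of_ne (le_trans hmem.2 hZ.2) hx.2
      exact geom A x hx0 hx1
    rw [setLIntegral_congr_fun_ae measurableSet_Icc hcong,
      lintegral_tsum (f := fun (n : ℕ) (x : ℝ) => ENNReal.ofReal (x ^ ((n:ℝ) + A)))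
        fun n => ((show Measurable fun x : ℝ => ENNReal.ofReal (x ^ ((n:ℝ) + A)) by fun_prop)).aemeasurable]
    refine tsum_congr fun n => ?_
    have hr : (0:ℝ) ≤ (n:ℝ) + A := add_nonneg (Nat.cast_nonneg n) hA
    have := lint_rpow ((n:ℝ) + A) hr Z hZ.1 1 one_pos
    simp only [div_one, mul_one] at this
    rw [show (fun x : ℝ => ENNReal.ofReal (x ^ ((n:ℝ) + A))) = fun x : ℝ => ENNReal.ofReal (x ^ ((n:ℝ) + A)) from rfl]
    rw [this, show ((n:ℝ) + A + 1) = ((n:ℝ) + 1 + A) by ring, pow_one]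
  | succ p ih =>
    intro Z hZ
    have mp := measurePreserving_piFinSuccAbove (fun _ : Fin (p+2) => (volume : Measure ℝ)) 0
    set e := MeasurableEquiv.piFinSuccAbove (fun _ : Fin (p+2) => ℝ) 0 with he
    have hmeasInd : Measurable fun z : Fin (p+2) → ℝ =>
        Set.indicator (S (p+1) Z) (fun z => ENNReal.ofReal (F A (p+1) z)) z :=
      ((measF A (p+1)).ennreal_ofReal).indicator (measS _ _)
    have e1 : (∫⁻ z in S (p+1) Z, ENNReal.ofReal (F A (p+1) z))
        = ∫⁻ x : ℝ, ∫⁻ w : Fin (p+1) → ℝ,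
            Set.indicator (S (p+1) Z) (fun z => ENNReal.ofReal (F A (p+1) z)) (Fin.cons x w)
              ∂(Measure.pi fun _ => volume) := by
      rw [← lintegral_indicator (measS _ _), show (volume : Measure (Fin (p+2) → ℝ))
        = Measure.pi fun _ => volume from volume_pi]
      have h2 := mp.lintegral_comp (f := fun q : ℝ × (Fin (p+1) → ℝ) =>
          Set.indicator (S (p+1) Z) (fun z => ENNReal.ofReal (F A (p+1) z)) (e.symm q))
          (hmeasInd.comp e.symm.measurable)
      simp only [MeasurableEquiv.symm_apply_apply] at h2
      rw [h2, lintegral_prod _ ((show Measurable fun q : ℝ × (Fin (p+1) → ℝ) =>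
        Set.indicator (S (p+1) Z) (fun z => ENNReal.ofReal (F A (p+1) z)) (e.symm q)
        from hmeasInd.comp e.symm.measurable)).aemeasurable]
      congr 1
      funext x
      congr 1
      funext w
      rw [esymm]
    rw [e1]
    have step1 : ∀ x : ℝ, (∫⁻ w : Fin (p+1) → ℝ,
        Set.indicator (S (p+1) Z) (fun z => ENNReal.ofReal (F A (p+1) z)) (Fin.cons x w)
          ∂(Measure.pi fun _ => volume))
        = Set.indicator (Set.Icc 0 Z) (fun x => ∫⁻ w in S p x,
            ENNReal.ofReal (x⁻¹ * F A p w) ∂(Measure.pi fun _ => volume)) x := by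
      intro x
      by_cases hx : x ∈ Set.Icc (0:ℝ) Z
      · rw [Set.indicator_of_mem hx, ← lintegral_indicator (measS p x)]
        congr 1
        funext w
        by_cases hw : w ∈ S p x
        · rw [Set.indicator_of_mem hw,
            Set.indicator_of_mem ((mem_cons p Z x w).mpr ⟨hx, hw⟩), F_cons]
        · rw [Set.indicator_of_notMem hw,
            Set.indicator_of_notMem (fun hc => hw ((mem_cons p Z x w).mp hc).2)]
      · rw [Set.indicator_of_notMem hx]
        have h0 : ∀ w : Fin (p+1) → ℝ,
            Set.indicator (S (p+1) Z) (fun z => ENNReal.ofReal (F A (p+1) z)) (Fin.cons x w) = 0 :=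
          fun w => Set.indicator_of_notMem (fun hc => hx ((mem_cons p Z x w).mp hc).1) _
        simp [h0]
    simp only [step1]
    rw [lintegral_indicator measurableSet_Icc]
    have h00 : ∀ᵐ x : ℝ, x ∉ ({0} : Set ℝ) := (Set.countable_singleton _).ae_notMem volume
    have hcong : ∀ᵐ x : ℝ, x ∈ Set.Icc (0:ℝ) Z →
        (∫⁻ w in S p x, ENNReal.ofReal (x⁻¹ * F A p w) ∂(Measure.pi fun _ => volume))
        = ∑' n : ℕ, ENNReal.ofReal (x ^ ((n:ℝ) + A) / ((n:ℝ)+1+A)^(p+1)) := by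
      filter_upwards [h00] with x hx hmem
      simp only [Set.mem_singleton_iff] at hx
      have hx0 : 0 < x := lt_of_le_of_ne hmem.1 (Ne.symm hx)
      have hmul : ∀ w : Fin (p+1) → ℝ,
          ENNReal.ofReal (x⁻¹ * F A p w) = ENNReal.ofReal x⁻¹ * ENNReal.ofReal (F A p w) :=
        fun w => ENNReal.ofReal_mul (inv_nonneg.mpr hx0.le)
      simp only [hmul]
      rw [lintegral_const_mul' _ _ ENNReal.ofReal_ne_top]
      have hpivol : (Measure.pi fun _ : Fin (p+1) => (volume : Measure ℝ))
          = (volume : Measure (Fin (p+1) → ℝ)) := volume_pi.symm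
      rw [hpivol, ih x ⟨hmem.1, le_trans hmem.2 hZ.2⟩, ← ENNReal.tsum_mul_left]
      refine tsum_congr fun n => ?_
      rw [← ENNReal.ofReal_mul (inv_nonneg.mpr hx0.le)]
      congr 1
      rw [show ((n:ℝ) + 1 + A) = ((n:ℝ) + A) + 1 by ring, Real.rpow_add hx0, Real.rpow_one]
      field_simp
    rw [setLIntegral_congr_fun_ae measurableSet_Icc hcong,
      lintegral_tsum (f := fun (n : ℕ) (x : ℝ) => ENNReal.ofReal (x ^ ((n:ℝ) + A) / ((n:ℝ)+1+A)^(p+1)))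
        fun n => ((show Measurable fun x : ℝ => ENNReal.ofReal (x ^ ((n:ℝ) + A) / ((n:ℝ)+1+A)^(p+1)) by fun_prop)).aemeasurable]
    refine tsum_congr fun n => ?_
    have hr : (0:ℝ) ≤ (n:ℝ) + A := add_nonneg (Nat.cast_nonneg n) hA
    have hc : (0:ℝ) < ((n:ℝ)+1+A)^(p+1) := by positivity
    rw [lint_rpow ((n:ℝ) + A) hr Z hZ.1 _ hc]
    congr 1
    rw [show ((n:ℝ) + A + 1) = ((n:ℝ) + 1 + A) by ring, ← pow_succ']

end Stmt0Aux

/-- series representation of the basic iterated integral.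
We write the integer `p ≥ 1` of the statement as `p + 1` with `p : ℕ`;
the condition "`Z ≠ 1` if `p = 1`" becomes `p = 0 → Z ≠ 1`.
The integration variables are `z 0 = z_1 ≥ z 1 ≥ ⋯ ≥ z p = z_p` and the
simplex is `{0 ≤ z_p ≤ ⋯ ≤ z_1 ≤ Z}`. -/
theorem stmt0 (A : ℝ) (hA : 0 ≤ A) (p : ℕ) (Z : ℝ) (hZ : Z ∈ Set.Icc (0:ℝ) 1)
    (hZ1 : p = 0 → Z ≠ 1) :
    (∫ z : Fin (p+1) → ℝ in
        {z | (∀ i j : Fin (p+1), i ≤ j → z j ≤ z i) ∧ 0 ≤ z (Fin.last p) ∧ z 0 ≤ Z},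
      (∏ i : Fin p, (z i.castSucc)⁻¹) * (z (Fin.last p)) ^ A / (1 - z (Fin.last p)))
    = ∑' n : ℕ, Z ^ ((n : ℝ) + 1 + A) / ((n : ℝ) + 1 + A) ^ (p + 1) := by
  have hset : {z : Fin (p+1) → ℝ | (∀ i j : Fin (p+1), i ≤ j → z j ≤ z i)
      ∧ 0 ≤ z (Fin.last p) ∧ z 0 ≤ Z} = Stmt0Aux.S p Z := rfl
  have hnn : 0 ≤ᵐ[volume.restrict (Stmt0Aux.S p Z)] Stmt0Aux.F A p := by
    refine (ae_restrict_iff' (Stmt0Aux.measS p Z)).mpr (ae_of_all _ ?_)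
    rintro z ⟨hmono, hl, h0⟩
    have hnn : ∀ i, 0 ≤ z i := fun i => le_trans hl (hmono i (Fin.last p) (Fin.le_last i))
    have h1 : z (Fin.last p) ≤ 1 :=
      le_trans (hmono 0 (Fin.last p) (Fin.zero_le _)) (le_trans h0 hZ.2)
    exact div_nonneg (mul_nonneg (Finset.prod_nonneg fun i _ => inv_nonneg.mpr (hnn _))
      (Real.rpow_nonneg (hnn _) A)) (by linarith)
  have hm : AEStronglyMeasurable (Stmt0Aux.F A p) (volume.restrict (Stmt0Aux.S p Z)) :=
    (Stmt0Aux.measF A p).aestronglyMeasurable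
  rw [hset, show (fun z : Fin (p+1) → ℝ => (∏ i : Fin p, (z i.castSucc)⁻¹)
      * (z (Fin.last p)) ^ A / (1 - z (Fin.last p))) = Stmt0Aux.F A p from rfl]
  rw [integral_eq_lintegral_of_nonneg_ae hnn hm, Stmt0Aux.key A hA p Z hZ,
    ENNReal.tsum_toReal_eq fun n => ENNReal.ofReal_ne_top]
  refine tsum_congr fun n => ?_
  refine ENNReal.toReal_ofReal ?_
  have : (0:ℝ) ≤ (n:ℝ) + 1 + A := by positivity
  exact div_nonneg (Real.rpow_nonneg hZ.1 _) (pow_nonneg this _)
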